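/- Let λ ∈ ℂ with |λ| = 1, and let U_x = [[a_x, b_x],[c_x, d_x]] (x ∈ ℤ) be 2×2 unitary matrices with a_x b_x c_x d_x ≠ 0. Define Ψ(x) = D⁺_x D⁺_{x−1} ⋯ D⁺_1 Ψ(0) for x ≥ 1, where D⁺_x = [[(λ² − b_x c_{x−1})/(λ a_x), −b_x d_{x−1}/(λ a_x)],[c_{x−1}/λ, d_{x−1}/λ]]. Then for all x ≥ 1, the eigenvalue relation λ Ψ^L(x) = a_{x+1}Ψ^L(x+1) + b_{x+1}Ψ^R(x+1) and λ Ψ^R(x) = c_{x−1}Ψ^L(x−1) + d_{x−1}Ψ^R(x−1) holds componentwise whenever the recursion defining Ψ is satisfied. -/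

import Mathlib

open Complex Matrix

theorem stmt_1 (lam : ℂ) (hlam : ‖lam‖ = 1)
    (a b c d : ℤ → ℂ)
    (hU : ∀ x : ℤ, (!![a x, b x; c x, d x] : Matrix (Fin 2) (Fin 2) ℂ) ∈
      Matrix.unitaryGroup (Fin 2) ℂ)
    (hne : ∀ x : ℤ, a x * b x * c x * d x ≠ 0)
    (L R : ℤ → ℂ)
    (hrec : ∀ x : ℤ, 1 ≤ x →
      L x = (lam ^ 2 - b x * c (x - 1)) / (lam * a x) * L (x - 1)
              - b x * d (x - 1) / (lam * a x) * R (x - 1) ∧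
      R x = c (x - 1) / lam * L (x - 1) + d (x - 1) / lam * R (x - 1)) :
    ∀ x : ℤ, 1 ≤ x →
      lam * L x = a (x + 1) * L (x + 1) + b (x + 1) * R (x + 1) ∧
      lam * R x = c (x - 1) * L (x - 1) + d (x - 1) * R (x - 1) := by
  have hlam0 : lam ≠ 0 := by
    intro h; rw [h] at hlam; simp at hlam
  intro x hx
  have ha : a (x + 1) ≠ 0 := by
    have := hne (x + 1)
    intro h; apply this; rw [h]; ring
  obtain ⟨hL, hR⟩ := hrec (x + 1) (by linarith)
  rw [show x + 1 - 1 = x by ring] at hL hR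
  constructor
  · rw [hL, hR]; field_simp; ring
  · obtain ⟨_, hR'⟩ := hrec x hx
    rw [hR']; field_simp
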